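/- Privacy amplification by a Dobrushin post-processing kernel (Lemma 1): Let X be a type with an adjacency relation Adj, and let Y, Z be measurable spaces. Let A : X → Measure Y be a mechanism with each A x a probability measure satisfying (ε, δ)-differential privacy with ε ≥ 0 and δ ≥ 0. Let C : Y → Measure Z be a Markov kernel (each C y a probability measure and y ↦ C y measurable) that is λ-Dobrushin with 0 ≤ λ ≤ 1, i.e. for all y, y' ∈ Y and every measurable set S ⊆ Z, (C y) S ≤ (C y') S + λ. Then the composed mechanism x ↦ (A x).bind C satisfies (ε, λ·δ)-differential privacy. -/

import Mathlib

open MeasureTheory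

/-- A mechanism `A : X → Measure Y` (each `A x` a probability measure) satisfies
`(ε, δ)`-differential privacy with respect to the adjacency relation `Adj`. -/
def DiffPrivate {X Y : Type*} [MeasurableSpace Y] (Adj : X → X → Prop)
    (A : X → Measure Y) (ε δ : ℝ) : Prop :=
  ∀ x x', Adj x x' → ∀ S : Set Y, MeasurableSet S →
    A x S ≤ ENNReal.ofReal (Real.exp ε) * A x' S + ENNReal.ofReal δ

/-- Privacy amplification by a λ-Dobrushin Markov kernel (Lemma 1). -/
theorem privacy_amplification_dobrushin
    {X Y Z : Type*} [MeasurableSpace Y] [MeasurableSpace Z]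
    (Adj : X → X → Prop) (ε δ lam : ℝ) (hε : 0 ≤ ε) (hδ : 0 ≤ δ)
    (hlam0 : 0 ≤ lam) (hlam1 : lam ≤ 1)
    (A : X → Measure Y) (hA : ∀ x, IsProbabilityMeasure (A x))
    (hADP : DiffPrivate Adj A ε δ)
    (C : Y → Measure Z) (hC : ∀ y, IsProbabilityMeasure (C y))
    (hCmeas : Measurable C)
    (hDob : ∀ y y' : Y, ∀ S : Set Z, MeasurableSet S →
      C y S ≤ C y' S + ENNReal.ofReal lam) :
    DiffPrivate Adj (fun x => (A x).bind C) ε (lam * δ) := by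
  open Set in
  intro x x' hadj S hS
  have hY : Nonempty Y := by
    rcases isEmpty_or_nonempty Y with h | h
    · have h1 : A x Set.univ = 1 := measure_univ
      rw [Set.univ_eq_empty_iff.mpr h] at h1
      simp at h1
    · exact h
  have fmeas : Measurable fun y => C y S := (Measure.measurable_coe hS).comp hCmeas
  -- the infimum
  set m : ENNReal := ⨅ y, C y S with hm
  have hmle : ∀ y, m ≤ C y S := fun y => iInf_le _ y
  have hfle1 : ∀ y, C y S ≤ 1 := fun y => prob_le_one
  have hmne : m ≠ ⊤ := by
    refine ne_top_of_le_ne_top ?_ (hmle hY.some)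
    exact ne_top_of_le_ne_top ENNReal.one_ne_top (hfle1 hY.some)
  have hfub : ∀ y, C y S ≤ m + ENNReal.ofReal lam := by
    intro y
    rw [← tsub_le_iff_right]
    exact le_iInf fun y' => tsub_le_iff_right.mpr (hDob y y' S hS)
  set g : Y → ℝ := fun y => (C y S - m).toReal with hg
  have gnn : ∀ y, 0 ≤ g y := fun y => ENNReal.toReal_nonneg
  have gmeas : Measurable g := (fmeas.sub measurable_const).ennreal_toReal
  have gdecomp : ∀ y, C y S = m + ENNReal.ofReal (g y) := by
    intro y
    rw [hg, ENNReal.ofReal_toReal (by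
      exact ne_top_of_le_ne_top ENNReal.one_ne_top (le_trans (tsub_le_self) (hfle1 y)))]
    exact (add_tsub_cancel_of_le (hmle y)).symm
  have gle : ∀ y, g y ≤ lam := by
    intro y
    refine ENNReal.toReal_le_of_le_ofReal hlam0 ?_
    rw [tsub_le_iff_right, add_comm]
    exact hfub y
  -- bind formula
  have hbind : ∀ x₀, ((A x₀).bind C) S = ∫⁻ y, C y S ∂(A x₀) :=
    fun x₀ => Measure.bind_apply hS hCmeas.aemeasurable
  -- decompose integral
  have hdec : ∀ x₀, (∫⁻ y, C y S ∂(A x₀)) = m + ∫⁻ y, ENNReal.ofReal (g y) ∂(A x₀) := by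
    intro x₀
    have : (∫⁻ y, C y S ∂(A x₀)) = ∫⁻ y, (m + ENNReal.ofReal (g y)) ∂(A x₀) := by
      exact lintegral_congr fun y => gdecomp y
    rw [this, lintegral_add_left measurable_const, lintegral_const, measure_univ, mul_one]
  -- layer cake
  have hlc : ∀ x₀, (∫⁻ y, ENNReal.ofReal (g y) ∂(A x₀))
      = ∫⁻ t in Ioi (0:ℝ), A x₀ {a | t < g a} :=
    fun x₀ => lintegral_eq_lintegral_meas_lt (A x₀) (Filter.Eventually.of_forall gnn)
      gmeas.aemeasurable
  -- level sets measurable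
  have hlev : ∀ t : ℝ, MeasurableSet {a | t < g a} :=
    fun t => measurableSet_lt measurable_const gmeas
  -- tail function measurable (antitone)
  have htail : ∀ x₀ : X, Measurable fun t : ℝ => A x₀ {a | t < g a} := by
    intro x₀
    exact Antitone.measurable fun s t hst =>
      measure_mono fun a ha => lt_of_le_of_lt hst ha
  -- split domain
  have hsplit : ∀ x₀ : X, (∫⁻ t in Ioi (0:ℝ), A x₀ {a | t < g a})
      = ∫⁻ t in Ioc (0:ℝ) lam, A x₀ {a | t < g a} := by
    intro x₀
    rw [← Ioc_union_Ioi_eq_Ioi hlam0, lintegral_union measurableSet_Ioi (Ioc_disjoint_Ioi le_rfl)]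
    have : (∫⁻ t in Ioi lam, A x₀ {a | t < g a}) = ∫⁻ t in Ioi lam, 0 := by
      refine setLIntegral_congr_fun measurableSet_Ioi ?_
      intro t ht
      have : {a | t < g a} = ∅ := by
        ext a; simp only [mem_setOf_eq, mem_empty_iff_false, iff_false, not_lt]
        exact le_trans (gle a) (le_of_lt ht)
      simp only [this, measure_empty]
    rw [this, lintegral_zero, add_zero]
  -- main estimate
  calc ((A x).bind C) S
      = m + ∫⁻ t in Ioc (0:ℝ) lam, A x {a | t < g a} := by
        rw [hbind, hdec, hlc, hsplit]
    _ ≤ m + ∫⁻ t in Ioc (0:ℝ) lam,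
          (ENNReal.ofReal (Real.exp ε) * A x' {a | t < g a} + ENNReal.ofReal δ) := by
        gcongr with t
        exact hADP x x' hadj _ (hlev t)
    _ = m + (ENNReal.ofReal (Real.exp ε) * ∫⁻ t in Ioc (0:ℝ) lam, A x' {a | t < g a})
          + ENNReal.ofReal δ * ENNReal.ofReal lam := by
        rw [lintegral_add_right _ measurable_const, lintegral_const,
          Measure.restrict_apply MeasurableSet.univ, Set.univ_inter, Real.volume_Ioc,
          lintegral_const_mul _ (htail x'), sub_zero, add_assoc]
    _ ≤ ENNReal.ofReal (Real.exp ε) * m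
        + ENNReal.ofReal (Real.exp ε) * (∫⁻ t in Ioi (0:ℝ), A x' {a | t < g a})
        + ENNReal.ofReal (lam * δ) := by
        gcongr
        · refine le_mul_of_one_le_left (zero_le) ?_
          rw [← ENNReal.ofReal_one]
          exact ENNReal.ofReal_le_ofReal (Real.one_le_exp hε)
        · exact Ioc_subset_Ioi_self
        · rw [← ENNReal.ofReal_mul hδ, mul_comm]
    _ = ENNReal.ofReal (Real.exp ε) * ((A x').bind C) S + ENNReal.ofReal (lam * δ) := by
        rw [hbind, hdec, hlc, mul_add]
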